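/- Let p(λ) = λ⁴ + a3·λ³ + a2·λ² + a1·λ + a0 be a real quartic with a0, a1, a2, a3 > 0 and a3(a1·a2 - a0·a3) - a1² > 0. Then all roots of p have negative real part. -/
import Mathlib

theorem stmt_18 (a0 a1 a2 a3 : ℝ)
    (h0 : 0 < a0) (h1 : 0 < a1) (h2 : 0 < a2) (h3 : 0 < a3)
    (hH : a3*(a1*a2 - a0*a3) - a1^2 > 0) :
    ∀ z : ℂ, z^4 + (a3 : ℂ)*z^3 + (a2 : ℂ)*z^2 + (a1 : ℂ)*z + (a0 : ℂ) = 0 → z.re < 0 := by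
  intro z hz
  by_contra hre
  push_neg at hre
  set x := z.re with hx'
  set y := z.im with hy'
  have e1 : x^4 - 6*x^2*y^2 + y^4 + a3*(x^3 - 3*x*y^2) + a2*(x^2 - y^2) + a1*x + a0 = 0 := by
    have h := congrArg Complex.re hz
    simp only [Complex.add_re, Complex.mul_re, Complex.mul_im, Complex.ofReal_re,
      Complex.ofReal_im, Complex.zero_re, pow_succ, pow_zero, one_mul, Complex.one_re,
      Complex.one_im, Complex.add_im] at h
    ring_nf at h ⊢
    linarith [h]
  have e2 : y*(4*x^3 - 4*x*y^2 + a3*(3*x^2 - y^2) + 2*a2*x + a1) = 0 := by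
    have h := congrArg Complex.im hz
    simp only [Complex.add_re, Complex.mul_re, Complex.mul_im, Complex.ofReal_re,
      Complex.ofReal_im, Complex.zero_im, pow_succ, pow_zero, one_mul, Complex.one_re,
      Complex.one_im, Complex.add_im] at h
    ring_nf at h ⊢
    linarith [h]
  rcases mul_eq_zero.mp e2 with hy0 | hM
  · -- y = 0 : real root x ≥ 0, impossible
    rw [hy0] at e1
    nlinarith [pow_nonneg hre 4, mul_nonneg h3.le (pow_nonneg hre 3), mul_nonneg h2.le (pow_nonneg hre 2), mul_nonneg h1.le hre]
  · -- y ≠ 0 case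
    have hc : y^2*(4*x+a3) = 4*x^3 + 3*a3*x^2 + 2*a2*x + a1 := by linarith [hM]
    set L : ℝ := 4*x + a3 with hL
    set c : ℝ := 4*x^3 + 3*a3*x^2 + 2*a2*x + a1 with hcdef
    set B : ℝ := 6*x^2 + 3*a3*x + a2 with hB
    set P : ℝ := x^4 + a3*x^3 + a2*x^2 + a1*x + a0 with hP
    have hF : c^2 - c*L*B + L^2*P = 0 := by
      have e1' : y^4 - y^2*B + P = 0 := by rw [hB, hP]; linarith [e1]
      calc c^2 - c*L*B + L^2*P
          = L^2*(y^4 - y^2*B + P) - (c + y^2*L - L*B)*(y^2*L - c) := by ring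
        _ = 0 := by rw [e1', hc]; ring
    have hkey : a3^2 * (-(c^2 - c*L*B + L^2*P)) =
        (a3*(a1*a2 - a0*a3) - a1^2)*L^2
        + 2*a3*x*((a2*a3-2*a1)^2 + a1*a3^3)
        + 4*x^2*((a2*a3-2*a1)^2 + a1*a3^3 + 2*a2*a3^4)
        + 8*a3^3*x^3*(4*a2+a3^2) + 16*a3^2*x^4*(2*a2+3*a3^2)
        + 96*a3^3*x^5 + 64*a3^2*x^6 := by
      rw [hL, hcdef, hB, hP]; ring
    have hL2 : (0:ℝ) < L^2 := by positivity
    nlinarith [mul_pos hH hL2,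
      mul_nonneg (mul_nonneg (by linarith : (0:ℝ) ≤ 2*a3) hre) (by positivity : (0:ℝ) ≤ (a2*a3-2*a1)^2 + a1*a3^3),
      mul_nonneg (by positivity : (0:ℝ) ≤ 4*x^2) (by positivity : (0:ℝ) ≤ (a2*a3-2*a1)^2 + a1*a3^3 + 2*a2*a3^4),
      mul_nonneg (mul_nonneg (by positivity : (0:ℝ) ≤ 8*a3^3) (pow_nonneg hre 3)) (by positivity : (0:ℝ) ≤ 4*a2+a3^2),
      mul_nonneg (by positivity : (0:ℝ) ≤ 16*a3^2*x^4) (by positivity : (0:ℝ) ≤ 2*a2+3*a3^2),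
      mul_nonneg (by positivity : (0:ℝ) ≤ 96*a3^3) (pow_nonneg hre 5),
      (by positivity : (0:ℝ) ≤ 64*a3^2*x^6)]
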